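/- Let $D_1, D_2$ be positive integers with $\gcd(D_1, D_2) = 1$. Then the GL(3) long Weyl element Kloosterman sum factorizes as $S(m_1, m_2, n_1, n_2; D_1, D_2) = S(m_1 D_2, n_1; D_1) \cdot S(n_2 D_1, m_2; D_2)$, where the factors on the right are classical Kloosterman sums $S(a, b; c) = \sum_{x \bmod c, \gcd(x,c)=1} e\left(\frac{ax + b\bar{x}}{c}\right)$. -/

import Mathlib

open Finset

/-- `e(x) = e^{2πix}`. -/
noncomputable def efn (x : ℝ) : ℂ := Complex.exp (2 * Real.pi * Complex.I * x)

/-- Classical Kloosterman sum `S(a,b;c) = ∑_{x mod c, (x,c)=1} e((ax + b x̄)/c)`. -/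
noncomputable def Kl (a b : ℤ) (c : ℕ) : ℂ :=
  ∑ x ∈ Finset.range c, if Nat.gcd x c = 1 then
    efn (((a * x + b * (((x : ZMod c)⁻¹).val : ℤ) : ℤ) : ℝ) / c) else 0

/-- A canonical choice of `Y` with `Y·B + Z·C ≡ 1 (mod D)` when `gcd(B,C,D)=1`. -/
def Ycoef (B C D : ℕ) : ℤ := Nat.gcdA B (Nat.gcd C D)

/-- A canonical choice of `Z` with `Y·B + Z·C ≡ 1 (mod D)` when `gcd(B,C,D)=1`. -/
def Zcoef (B C D : ℕ) : ℤ := Nat.gcdB B (Nat.gcd C D) * Nat.gcdA C D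

/-- The GL(3) long Weyl element Kloosterman sum `S(m₁,m₂,n₁,n₂;D₁,D₂)`. -/
noncomputable def SGL3 (m1 m2 n1 n2 : ℤ) (D1 D2 : ℕ) : ℂ :=
  ∑ B1 ∈ Finset.range D1, ∑ C1 ∈ Finset.range D1,
  ∑ B2 ∈ Finset.range D2, ∑ C2 ∈ Finset.range D2,
    if Nat.gcd B1 (Nat.gcd C1 D1) = 1 ∧ Nat.gcd B2 (Nat.gcd C2 D2) = 1 ∧
       (D1 * D2) ∣ (D1 * C2 + B1 * B2 + D2 * C1) then
      efn ((((m1 * B1 + n1 * (Ycoef B1 C1 D1 * D2 - Zcoef B1 C1 D1 * B2)) : ℤ) : ℝ) / D1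
        + (((m2 * B2 + n2 * (Ycoef B2 C2 D2 * D1 - Zcoef B2 C2 D2 * B1)) : ℤ) : ℝ) / D2)
    else 0

lemma efn_add (x y : ℝ) : efn (x + y) = efn x * efn y := by
  simp [efn, mul_add, Complex.exp_add]
lemma efn_int (k : ℤ) : efn k = 1 := by
  have := Complex.exp_int_mul_two_pi_mul_I k
  simpa [efn, mul_comm, mul_assoc, mul_left_comm] using this
noncomputable def e1 (D : ℕ) (k : ℤ) : ℂ := efn ((k : ℝ) / D)
lemma e1_congr {D : ℕ} (hD : D ≠ 0) {k k' : ℤ} (h : (k : ZMod D) = (k' : ZMod D)) :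
    e1 D k = e1 D k' := by
  have hd : (D : ℤ) ∣ (k - k') := by
    rwa [← ZMod.intCast_zmod_eq_zero_iff_dvd, Int.cast_sub, sub_eq_zero]
  obtain ⟨t, ht⟩ := hd
  have hk : k = k' + D * t := by linarith
  have hDR : (D : ℝ) ≠ 0 := Nat.cast_ne_zero.mpr hD
  have : ((k : ℝ)) / D = (k' : ℝ) / D + (t : ℝ) := by
    rw [hk]; push_cast; field_simp
  rw [e1, this, efn_add, ← e1, efn_int, mul_one]
lemma zmod_inv_unique {D : ℕ} {a b : ZMod D} (ha : IsUnit a) (h : a * b = 1) : a⁻¹ = b := by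
  have h1 := ZMod.inv_mul_of_unit a ha
  calc a⁻¹ = a⁻¹ * (a * b) := by rw [h, mul_one]
    _ = (a⁻¹ * a) * b := by ring
    _ = b := by rw [h1, one_mul]
lemma YZ_spec (B C D : ℕ) (h : Nat.gcd B (Nat.gcd C D) = 1) :
    ((Ycoef B C D * B + Zcoef B C D * C : ℤ) : ZMod D) = 1 := by
  have h1 : (Nat.gcd B (Nat.gcd C D) : ℤ)
      = B * Nat.gcdA B (Nat.gcd C D) + (Nat.gcd C D) * Nat.gcdB B (Nat.gcd C D) :=
    Nat.gcd_eq_gcd_ab _ _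
  have h2 : (Nat.gcd C D : ℤ) = C * Nat.gcdA C D + D * Nat.gcdB C D :=
    Nat.gcd_eq_gcd_ab _ _
  have h1' : (1 : ℤ) = B * Nat.gcdA B (Nat.gcd C D) + (Nat.gcd C D) * Nat.gcdB B (Nat.gcd C D) := by
    rw [← h1, h]; norm_num
  have e1 : (1 : ZMod D) = (B : ZMod D) * (Nat.gcdA B (Nat.gcd C D) : ZMod D)
      + ((Nat.gcd C D : ℤ) : ZMod D) * (Nat.gcdB B (Nat.gcd C D) : ZMod D) := by
    have := congrArg (fun z : ℤ => (z : ZMod D)) h1'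
    push_cast at this ⊢
    exact this
  have e2 : ((Nat.gcd C D : ℤ) : ZMod D) = (C : ZMod D) * (Nat.gcdA C D : ZMod D) := by
    have := congrArg (fun z : ℤ => (z : ZMod D)) h2
    push_cast at this ⊢
    simpa [ZMod.natCast_self] using this
  rw [Ycoef, Zcoef]
  push_cast
  rw [e2] at e1
  linear_combination -e1
lemma gcd_B1 {B1 C1 B2 C2 D1 D2 : ℕ} (hcop : Nat.Coprime D1 D2)
    (hg : Nat.gcd B1 (Nat.gcd C1 D1) = 1)
    (hdvd : D1 ∣ D1 * C2 + B1 * B2 + D2 * C1) : Nat.gcd B1 D1 = 1 := by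
  set g := Nat.gcd B1 D1 with hgdef
  have hgB : g ∣ B1 := Nat.gcd_dvd_left _ _
  have hgD : g ∣ D1 := Nat.gcd_dvd_right _ _
  have hsum : g ∣ D1 * C2 + B1 * B2 + D2 * C1 := hgD.trans hdvd
  have h2 : g ∣ D1 * C2 + B1 * B2 := Dvd.dvd.add (hgD.mul_right C2) (hgB.mul_right B2)
  have h1 : g ∣ D2 * C1 := by
    have := Nat.dvd_sub hsum h2
    simpa using this
  have hcg : Nat.Coprime g D2 := Nat.Coprime.coprime_dvd_left hgD hcop
  have hC1 : g ∣ C1 := hcg.dvd_of_dvd_mul_left h1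
  have : g ∣ Nat.gcd B1 (Nat.gcd C1 D1) := Nat.dvd_gcd hgB (Nat.dvd_gcd hC1 hgD)
  rw [hg] at this
  exact Nat.dvd_one.mp this
lemma gcd_B2 {B1 C1 B2 C2 D1 D2 : ℕ} (hcop : Nat.Coprime D1 D2)
    (hg : Nat.gcd B2 (Nat.gcd C2 D2) = 1)
    (hdvd : D2 ∣ D1 * C2 + B1 * B2 + D2 * C1) : Nat.gcd B2 D2 = 1 := by
  set g := Nat.gcd B2 D2 with hgdef
  have hgB : g ∣ B2 := Nat.gcd_dvd_left _ _
  have hgD : g ∣ D2 := Nat.gcd_dvd_right _ _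
  have hsum : g ∣ D1 * C2 + B1 * B2 + D2 * C1 := hgD.trans hdvd
  have h2 : g ∣ B1 * B2 + D2 * C1 := Dvd.dvd.add (hgB.mul_left B1) (hgD.mul_right C1)
  have h1 : g ∣ D1 * C2 := by
    have := Nat.dvd_sub hsum h2
    have heq : D1 * C2 + B1 * B2 + D2 * C1 - (B1 * B2 + D2 * C1) = D1 * C2 := by omega
    rwa [heq] at this
  have hcg : Nat.Coprime g D1 := Nat.Coprime.coprime_dvd_left hgD hcop.symm
  have hC2 : g ∣ C2 := hcg.dvd_of_dvd_mul_left h1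
  have : g ∣ Nat.gcd B2 (Nat.gcd C2 D2) := Nat.dvd_gcd hgB (Nat.dvd_gcd hC2 hgD)
  rw [hg] at this
  exact Nat.dvd_one.mp this
lemma inner_collapse (D1 D2 : ℕ) [NeZero D1] [NeZero D2] (hcop : Nat.Coprime D1 D2)
    (m1 m2 n1 n2 : ℤ) (B1 B2 : ℕ) :
    (∑ C1 ∈ Finset.range D1, ∑ C2 ∈ Finset.range D2,
      if Nat.gcd B1 (Nat.gcd C1 D1) = 1 ∧ Nat.gcd B2 (Nat.gcd C2 D2) = 1 ∧
         (D1 * D2) ∣ (D1 * C2 + B1 * B2 + D2 * C1) then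
        efn ((((m1 * B1 + n1 * (Ycoef B1 C1 D1 * D2 - Zcoef B1 C1 D1 * B2)) : ℤ) : ℝ) / D1
          + (((m2 * B2 + n2 * (Ycoef B2 C2 D2 * D1 - Zcoef B2 C2 D2 * B1)) : ℤ) : ℝ) / D2)
      else 0) =
    (if Nat.gcd B1 D1 = 1 then
        e1 D1 (m1 * B1 + n1 * (D2 * (((B1 : ZMod D1)⁻¹).val : ℤ))) else 0)
    * (if Nat.gcd B2 D2 = 1 then
        e1 D2 (m2 * B2 + n2 * (D1 * (((B2 : ZMod D2)⁻¹).val : ℤ))) else 0) := by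
  have hU2 : IsUnit ((D2 : ZMod D1)) := (ZMod.isUnit_iff_coprime D2 D1).mpr hcop.symm
  have hU1 : IsUnit ((D1 : ZMod D2)) := (ZMod.isUnit_iff_coprime D1 D2).mpr hcop
  by_cases hg1 : Nat.gcd B1 D1 = 1
  · by_cases hg2 : Nat.gcd B2 D2 = 1
    · rw [if_pos hg1, if_pos hg2]
      have hB1u : IsUnit ((B1 : ZMod D1)) := (ZMod.isUnit_iff_coprime B1 D1).mpr hg1
      have hB2u : IsUnit ((B2 : ZMod D2)) := (ZMod.isUnit_iff_coprime B2 D2).mpr hg2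
      set x1 : ZMod D1 := (-((B1 : ZMod D1) * B2)) * (D2 : ZMod D1)⁻¹ with hx1
      set x2 : ZMod D2 := (-((B1 : ZMod D2) * B2)) * (D1 : ZMod D2)⁻¹ with hx2
      set c1 := x1.val with hc1
      set c2 := x2.val with hc2
      have hc1cast : ((c1 : ℕ) : ZMod D1) = x1 := by
        rw [hc1, ZMod.natCast_val, ZMod.cast_id]
      have hc2cast : ((c2 : ℕ) : ZMod D2) = x2 := by
        rw [hc2, ZMod.natCast_val, ZMod.cast_id]
      have hD2c1 : (D2 : ZMod D1) * (c1 : ZMod D1) + (B1 : ZMod D1) * B2 = 0 := by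
        rw [hc1cast, hx1]
        have h5 : (D2 : ZMod D1) * (-((B1 : ZMod D1) * B2) * (D2 : ZMod D1)⁻¹)
            = ((D2 : ZMod D1) * (D2 : ZMod D1)⁻¹) * (-((B1 : ZMod D1) * B2)) := by ring
        rw [h5, ZMod.mul_inv_of_unit _ hU2, one_mul]
        ring
      have hD1c2 : (D1 : ZMod D2) * (c2 : ZMod D2) + (B1 : ZMod D2) * B2 = 0 := by
        rw [hc2cast, hx2]
        have h5 : (D1 : ZMod D2) * (-((B1 : ZMod D2) * B2) * (D1 : ZMod D2)⁻¹)
            = ((D1 : ZMod D2) * (D1 : ZMod D2)⁻¹) * (-((B1 : ZMod D2) * B2)) := by ring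
        rw [h5, ZMod.mul_inv_of_unit _ hU1, one_mul]
        ring
      have force1 : ∀ C1 C2 : ℕ, C1 < D1 →
          (D1 * D2 ∣ D1 * C2 + B1 * B2 + D2 * C1) → C1 = c1 := by
        intro C1 C2 hlt h
        have hE : ((D1 * C2 + B1 * B2 + D2 * C1 : ℕ) : ZMod D1) = 0 :=
          (ZMod.natCast_eq_zero_iff _ _).mpr ((dvd_mul_right D1 D2).trans h)
        push_cast at hE
        rw [ZMod.natCast_self] at hE
        have h4 : (C1 : ZMod D1) = x1 := by
          calc (C1 : ZMod D1) = ((D2 : ZMod D1)⁻¹ * D2) * C1 := by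
                rw [ZMod.inv_mul_of_unit _ hU2, one_mul]
            _ = x1 := by rw [hx1]; linear_combination (D2 : ZMod D1)⁻¹ * hE
        calc C1 = ((C1 : ZMod D1)).val := (ZMod.val_cast_of_lt hlt).symm
          _ = c1 := by rw [h4, hc1]
      have force2 : ∀ C1 C2 : ℕ, C2 < D2 →
          (D1 * D2 ∣ D1 * C2 + B1 * B2 + D2 * C1) → C2 = c2 := by
        intro C1 C2 hlt h
        have hE : ((D1 * C2 + B1 * B2 + D2 * C1 : ℕ) : ZMod D2) = 0 :=
          (ZMod.natCast_eq_zero_iff _ _).mpr ((dvd_mul_left D2 D1).trans h)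
        push_cast at hE
        rw [ZMod.natCast_self] at hE
        have h4 : (C2 : ZMod D2) = x2 := by
          calc (C2 : ZMod D2) = ((D1 : ZMod D2)⁻¹ * D1) * C2 := by
                rw [ZMod.inv_mul_of_unit _ hU1, one_mul]
            _ = x2 := by rw [hx2]; linear_combination (D1 : ZMod D2)⁻¹ * hE
        calc C2 = ((C2 : ZMod D2)).val := (ZMod.val_cast_of_lt hlt).symm
          _ = c2 := by rw [h4, hc2]
      have hgc1 : Nat.gcd B1 (Nat.gcd c1 D1) = 1 :=
        Nat.Coprime.coprime_dvd_right (Nat.gcd_dvd_right c1 D1) hg1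
      have hgc2 : Nat.gcd B2 (Nat.gcd c2 D2) = 1 :=
        Nat.Coprime.coprime_dvd_right (Nat.gcd_dvd_right c2 D2) hg2
      have hdvd1 : D1 ∣ D1 * c2 + B1 * B2 + D2 * c1 := by
        rw [← ZMod.natCast_eq_zero_iff]
        push_cast
        rw [ZMod.natCast_self]
        linear_combination hD2c1
      have hdvd2 : D2 ∣ D1 * c2 + B1 * B2 + D2 * c1 := by
        rw [← ZMod.natCast_eq_zero_iff]
        push_cast
        rw [ZMod.natCast_self]
        linear_combination hD1c2
      have hdvd : D1 * D2 ∣ D1 * c2 + B1 * B2 + D2 * c1 :=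
        Nat.Coprime.mul_dvd_of_dvd_of_dvd hcop hdvd1 hdvd2
      rw [Finset.sum_eq_single_of_mem c1 (Finset.mem_range.mpr (ZMod.val_lt x1))
        (fun C1 hC1 hne => Finset.sum_eq_zero (fun C2 hC2 => by
          rw [if_neg]
          rintro ⟨-, -, h3⟩
          exact hne (force1 C1 C2 (Finset.mem_range.mp hC1) h3)))]
      rw [Finset.sum_eq_single_of_mem c2 (Finset.mem_range.mpr (ZMod.val_lt x2))
        (fun C2 hC2 hne => by
          rw [if_neg]
          rintro ⟨-, -, h3⟩
          exact hne (force2 c1 C2 (Finset.mem_range.mp hC2) h3))]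
      rw [if_pos ⟨hgc1, hgc2, hdvd⟩]
      have hsplit : efn
          ((((m1 * B1 + n1 * (Ycoef B1 c1 D1 * D2 - Zcoef B1 c1 D1 * B2)) : ℤ) : ℝ) / D1
          + (((m2 * B2 + n2 * (Ycoef B2 c2 D2 * D1 - Zcoef B2 c2 D2 * B1)) : ℤ) : ℝ) / D2)
          = e1 D1 (m1 * B1 + n1 * (Ycoef B1 c1 D1 * D2 - Zcoef B1 c1 D1 * B2))
          * e1 D2 (m2 * B2 + n2 * (Ycoef B2 c2 D2 * D1 - Zcoef B2 c2 D2 * B1)) := by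
        rw [efn_add]; rfl
      rw [hsplit]
      congr 1
      · apply e1_congr (NeZero.ne D1)
        have hYZ1 := YZ_spec B1 c1 D1 hgc1
        rw [Ycoef, Zcoef] at hYZ1
        push_cast at hYZ1
        have hkey : ((Ycoef B1 c1 D1 * D2 - Zcoef B1 c1 D1 * B2 : ℤ) : ZMod D1)
            = (B1 : ZMod D1)⁻¹ * D2 := by
          have hmul : (B1 : ZMod D1) *
              ((Ycoef B1 c1 D1 * D2 - Zcoef B1 c1 D1 * B2 : ℤ) : ZMod D1)
              = (D2 : ZMod D1) := by
            rw [Ycoef, Zcoef]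
            push_cast
            linear_combination (D2 : ZMod D1) * hYZ1
              - ((Nat.gcdB B1 (Nat.gcd c1 D1) : ZMod D1)
                  * ((Nat.gcdA c1 D1 : ℤ) : ZMod D1)) * hD2c1
          calc ((Ycoef B1 c1 D1 * D2 - Zcoef B1 c1 D1 * B2 : ℤ) : ZMod D1)
              = ((B1 : ZMod D1)⁻¹ * B1)
                * ((Ycoef B1 c1 D1 * D2 - Zcoef B1 c1 D1 * B2 : ℤ) : ZMod D1) := by
                rw [ZMod.inv_mul_of_unit _ hB1u, one_mul]
            _ = (B1 : ZMod D1)⁻¹ * ((B1 : ZMod D1)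
                * ((Ycoef B1 c1 D1 * D2 - Zcoef B1 c1 D1 * B2 : ℤ) : ZMod D1)) := by ring
            _ = (B1 : ZMod D1)⁻¹ * D2 := by rw [hmul]
        calc ((m1 * B1 + n1 * (Ycoef B1 c1 D1 * D2 - Zcoef B1 c1 D1 * B2) : ℤ) : ZMod D1)
            = (m1 : ZMod D1) * B1 + (n1 : ZMod D1)
              * ((Ycoef B1 c1 D1 * D2 - Zcoef B1 c1 D1 * B2 : ℤ) : ZMod D1) := by
              push_cast; ring
          _ = (m1 : ZMod D1) * B1 + (n1 : ZMod D1) * ((B1 : ZMod D1)⁻¹ * D2) := by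
              rw [hkey]
          _ = ((m1 * B1 + n1 * (D2 * (((B1 : ZMod D1)⁻¹).val : ℤ)) : ℤ) : ZMod D1) := by
              push_cast [ZMod.natCast_val, ZMod.cast_id]
              ring
      · apply e1_congr (NeZero.ne D2)
        have hYZ2 := YZ_spec B2 c2 D2 hgc2
        rw [Ycoef, Zcoef] at hYZ2
        push_cast at hYZ2
        have hkey : ((Ycoef B2 c2 D2 * D1 - Zcoef B2 c2 D2 * B1 : ℤ) : ZMod D2)
            = (B2 : ZMod D2)⁻¹ * D1 := by
          have hmul : (B2 : ZMod D2) *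
              ((Ycoef B2 c2 D2 * D1 - Zcoef B2 c2 D2 * B1 : ℤ) : ZMod D2)
              = (D1 : ZMod D2) := by
            rw [Ycoef, Zcoef]
            push_cast
            linear_combination (D1 : ZMod D2) * hYZ2
              - ((Nat.gcdB B2 (Nat.gcd c2 D2) : ZMod D2)
                  * ((Nat.gcdA c2 D2 : ℤ) : ZMod D2)) * hD1c2
          calc ((Ycoef B2 c2 D2 * D1 - Zcoef B2 c2 D2 * B1 : ℤ) : ZMod D2)
              = ((B2 : ZMod D2)⁻¹ * B2)
                * ((Ycoef B2 c2 D2 * D1 - Zcoef B2 c2 D2 * B1 : ℤ) : ZMod D2) := by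
                rw [ZMod.inv_mul_of_unit _ hB2u, one_mul]
            _ = (B2 : ZMod D2)⁻¹ * ((B2 : ZMod D2)
                * ((Ycoef B2 c2 D2 * D1 - Zcoef B2 c2 D2 * B1 : ℤ) : ZMod D2)) := by ring
            _ = (B2 : ZMod D2)⁻¹ * D1 := by rw [hmul]
        calc ((m2 * B2 + n2 * (Ycoef B2 c2 D2 * D1 - Zcoef B2 c2 D2 * B1) : ℤ) : ZMod D2)
            = (m2 : ZMod D2) * B2 + (n2 : ZMod D2)
              * ((Ycoef B2 c2 D2 * D1 - Zcoef B2 c2 D2 * B1 : ℤ) : ZMod D2) := by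
              push_cast; ring
          _ = (m2 : ZMod D2) * B2 + (n2 : ZMod D2) * ((B2 : ZMod D2)⁻¹ * D1) := by
              rw [hkey]
          _ = ((m2 * B2 + n2 * (D1 * (((B2 : ZMod D2)⁻¹).val : ℤ)) : ℤ) : ZMod D2) := by
              push_cast [ZMod.natCast_val, ZMod.cast_id]
              ring
    · rw [if_neg hg2, mul_zero]
      refine Finset.sum_eq_zero (fun C1 _ => Finset.sum_eq_zero (fun C2 _ => ?_))
      rw [if_neg]
      rintro ⟨h1, h2, h3⟩
      exact hg2 (gcd_B2 hcop h2 ((Dvd.dvd.mul_left dvd_rfl D1).trans h3))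
  · rw [if_neg hg1, zero_mul]
    refine Finset.sum_eq_zero (fun C1 _ => Finset.sum_eq_zero (fun C2 _ => ?_))
    rw [if_neg]
    rintro ⟨h1, h2, h3⟩
    exact hg1 (gcd_B1 hcop h1 ((dvd_mul_right D1 D2).trans h3))
lemma coprime_val_of_isUnit {n : ℕ} {a : ZMod n} (h : IsUnit a) : Nat.gcd a.val n = 1 := by
  obtain ⟨u, rfl⟩ := h
  exact ZMod.val_coe_unit_coprime u
lemma factor1 (D1 D2 : ℕ) [NeZero D1] (hcop : Nat.Coprime D1 D2) (m1 n1 : ℤ) :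
    (∑ B1 ∈ Finset.range D1, if Nat.gcd B1 D1 = 1 then
        e1 D1 (m1 * B1 + n1 * (D2 * (((B1 : ZMod D1)⁻¹).val : ℤ))) else 0)
    = Kl (m1 * D2) n1 D1 := by
  have hU2 : IsUnit ((D2 : ZMod D1)) := (ZMod.isUnit_iff_coprime D2 D1).mpr hcop.symm
  have hU2' : IsUnit ((D2 : ZMod D1)⁻¹) :=
    IsUnit.of_mul_eq_one _ (ZMod.inv_mul_of_unit _ hU2)
  rw [Kl, ← Finset.sum_filter, ← Finset.sum_filter]
  refine Finset.sum_nbij' (fun B1 => ((D2 : ZMod D1)⁻¹ * B1).val)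
    (fun x => ((D2 : ZMod D1) * x).val) ?_ ?_ ?_ ?_ ?_
  · intro B1 hB1
    simp only [Finset.mem_filter, Finset.mem_range] at hB1 ⊢
    have hB1u : IsUnit ((B1 : ZMod D1)) := (ZMod.isUnit_iff_coprime B1 D1).mpr hB1.2
    exact ⟨ZMod.val_lt _, coprime_val_of_isUnit (hU2'.mul hB1u)⟩
  · intro x hx
    simp only [Finset.mem_filter, Finset.mem_range] at hx ⊢
    have hxu : IsUnit ((x : ZMod D1)) := (ZMod.isUnit_iff_coprime x D1).mpr hx.2
    exact ⟨ZMod.val_lt _, coprime_val_of_isUnit (hU2.mul hxu)⟩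
  · intro B1 hB1
    simp only [Finset.mem_filter, Finset.mem_range] at hB1
    show ((D2 : ZMod D1) * (((((D2 : ZMod D1)⁻¹ * B1).val : ℕ)) : ZMod D1)).val = B1
    rw [ZMod.natCast_val, ZMod.cast_id, ← mul_assoc, ZMod.mul_inv_of_unit _ hU2, one_mul,
      ZMod.val_cast_of_lt hB1.1]
  · intro x hx
    simp only [Finset.mem_filter, Finset.mem_range] at hx
    show ((D2 : ZMod D1)⁻¹ * (((((D2 : ZMod D1) * x).val : ℕ)) : ZMod D1)).val = x
    rw [ZMod.natCast_val, ZMod.cast_id, ← mul_assoc, ZMod.inv_mul_of_unit _ hU2, one_mul,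
      ZMod.val_cast_of_lt hx.1]
  · intro B1 hB1
    simp only [Finset.mem_filter, Finset.mem_range] at hB1
    have hB1u : IsUnit ((B1 : ZMod D1)) := (ZMod.isUnit_iff_coprime B1 D1).mpr hB1.2
    have hcast : ((((D2 : ZMod D1)⁻¹ * B1).val : ℕ) : ZMod D1) = (D2 : ZMod D1)⁻¹ * B1 := by
      rw [ZMod.natCast_val, ZMod.cast_id]
    have hinv : (((D2 : ZMod D1)⁻¹ * B1 : ZMod D1))⁻¹ = (D2 : ZMod D1) * (B1 : ZMod D1)⁻¹ := by
      apply ZMod.inv_eq_of_mul_eq_one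
      calc (D2 : ZMod D1)⁻¹ * B1 * ((D2 : ZMod D1) * (B1 : ZMod D1)⁻¹)
          = ((D2 : ZMod D1)⁻¹ * D2) * ((B1 : ZMod D1) * (B1 : ZMod D1)⁻¹) := by ring
        _ = 1 := by rw [ZMod.inv_mul_of_unit _ hU2, ZMod.mul_inv_of_unit _ hB1u, one_mul]
    show e1 D1 _ = efn _
    rw [show ((((m1 * D2) * (((D2 : ZMod D1)⁻¹ * B1).val : ℕ)
        + n1 * ((((((D2 : ZMod D1)⁻¹ * B1).val : ℕ) : ZMod D1))⁻¹.val : ℤ) : ℤ) : ℝ) / D1)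
        = (((m1 * D2) * (((D2 : ZMod D1)⁻¹ * B1).val : ℕ)
        + n1 * ((((((D2 : ZMod D1)⁻¹ * B1).val : ℕ) : ZMod D1))⁻¹.val : ℤ) : ℤ) : ℝ) / D1 from rfl]
    have := e1_congr (D := D1) (NeZero.ne D1)
      (k := m1 * B1 + n1 * (D2 * (((B1 : ZMod D1)⁻¹).val : ℤ)))
      (k' := (m1 * D2) * (((D2 : ZMod D1)⁻¹ * B1).val : ℕ)
        + n1 * ((((((D2 : ZMod D1)⁻¹ * B1).val : ℕ) : ZMod D1))⁻¹.val : ℤ)) ?_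
    · exact this
    · push_cast [hcast, hinv, ZMod.natCast_val, ZMod.cast_id]
      have h1 : (D2 : ZMod D1) * (D2 : ZMod D1)⁻¹ = 1 := ZMod.mul_inv_of_unit _ hU2
      linear_combination (-(m1 : ZMod D1) * (B1 : ZMod D1)) * h1
lemma factor2 (D1 D2 : ℕ) [NeZero D2] (m2 n2 : ℤ) :
    (∑ B2 ∈ Finset.range D2, if Nat.gcd B2 D2 = 1 then
        e1 D2 (m2 * B2 + n2 * (D1 * (((B2 : ZMod D2)⁻¹).val : ℤ))) else 0)
    = Kl (n2 * D1) m2 D2 := by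
  rw [Kl, ← Finset.sum_filter, ← Finset.sum_filter]
  have hmem : ∀ y ∈ Finset.filter (fun x => Nat.gcd x D2 = 1) (Finset.range D2),
      ((y : ZMod D2)⁻¹).val ∈ Finset.filter (fun x => Nat.gcd x D2 = 1) (Finset.range D2) := by
    intro y hy
    simp only [Finset.mem_filter, Finset.mem_range] at hy ⊢
    have hyu : IsUnit ((y : ZMod D2)) := (ZMod.isUnit_iff_coprime y D2).mpr hy.2
    have hyu' : IsUnit ((y : ZMod D2)⁻¹) :=
      IsUnit.of_mul_eq_one _ (ZMod.inv_mul_of_unit _ hyu)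
    exact ⟨ZMod.val_lt _, coprime_val_of_isUnit hyu'⟩
  have hinvol : ∀ y ∈ Finset.filter (fun x => Nat.gcd x D2 = 1) (Finset.range D2),
      ((((((y : ZMod D2)⁻¹).val : ℕ)) : ZMod D2)⁻¹).val = y := by
    intro y hy
    simp only [Finset.mem_filter, Finset.mem_range] at hy
    have hyu : IsUnit ((y : ZMod D2)) := (ZMod.isUnit_iff_coprime y D2).mpr hy.2
    rw [ZMod.natCast_val, ZMod.cast_id,
      ZMod.inv_eq_of_mul_eq_one _ _ _ (ZMod.inv_mul_of_unit _ hyu), ZMod.val_cast_of_lt hy.1]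
  refine Finset.sum_nbij' (fun B2 => ((B2 : ZMod D2)⁻¹).val)
    (fun x => ((x : ZMod D2)⁻¹).val) hmem hmem hinvol hinvol ?_
  intro B2 hB2
  simp only [Finset.mem_filter, Finset.mem_range] at hB2
  have hB2u : IsUnit ((B2 : ZMod D2)) := (ZMod.isUnit_iff_coprime B2 D2).mpr hB2.2
  apply e1_congr (NeZero.ne D2)
  have hcast : ((((B2 : ZMod D2)⁻¹).val : ℕ) : ZMod D2) = (B2 : ZMod D2)⁻¹ := by
    rw [ZMod.natCast_val, ZMod.cast_id]
  have hinv : (((B2 : ZMod D2)⁻¹ : ZMod D2))⁻¹ = (B2 : ZMod D2) :=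
    ZMod.inv_eq_of_mul_eq_one _ _ _ (ZMod.inv_mul_of_unit _ hB2u)
  push_cast [hcast, hinv, ZMod.natCast_val, ZMod.cast_id]
  ring

/-- Twisted multiplicativity for coprime moduli:
`S(m₁,m₂,n₁,n₂;D₁,D₂) = S(m₁D₂,n₁;D₁) S(n₂D₁,m₂;D₂)`. -/
theorem stmt1 (D1 D2 : ℕ) (hD1 : 0 < D1) (hD2 : 0 < D2) (hcop : Nat.Coprime D1 D2)
    (m1 m2 n1 n2 : ℤ) :
    SGL3 m1 m2 n1 n2 D1 D2 = Kl (m1 * D2) n1 D1 * Kl (n2 * D1) m2 D2 := by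
  haveI : NeZero D1 := ⟨hD1.ne'⟩
  haveI : NeZero D2 := ⟨hD2.ne'⟩
  rw [SGL3]
  have step : ∀ B1 ∈ Finset.range D1,
      (∑ C1 ∈ Finset.range D1, ∑ B2 ∈ Finset.range D2, ∑ C2 ∈ Finset.range D2,
        if Nat.gcd B1 (Nat.gcd C1 D1) = 1 ∧ Nat.gcd B2 (Nat.gcd C2 D2) = 1 ∧
           (D1 * D2) ∣ (D1 * C2 + B1 * B2 + D2 * C1) then
          efn ((((m1 * B1 + n1 * (Ycoef B1 C1 D1 * D2 - Zcoef B1 C1 D1 * B2)) : ℤ) : ℝ) / D1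
            + (((m2 * B2 + n2 * (Ycoef B2 C2 D2 * D1 - Zcoef B2 C2 D2 * B1)) : ℤ) : ℝ) / D2)
        else 0) =
      ∑ B2 ∈ Finset.range D2,
        (if Nat.gcd B1 D1 = 1 then
            e1 D1 (m1 * B1 + n1 * (D2 * (((B1 : ZMod D1)⁻¹).val : ℤ))) else 0)
        * (if Nat.gcd B2 D2 = 1 then
            e1 D2 (m2 * B2 + n2 * (D1 * (((B2 : ZMod D2)⁻¹).val : ℤ))) else 0) := by
    intro B1 _
    rw [Finset.sum_comm]
    exact Finset.sum_congr rfl (fun B2 _ => inner_collapse D1 D2 hcop m1 m2 n1 n2 B1 B2)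
  rw [Finset.sum_congr rfl step, ← Finset.sum_mul_sum, factor1 D1 D2 hcop m1 n1,
    factor2 D1 D2 m2 n2]
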